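/- arXiv:2101.01972 — 4 statements merged into one kernel-verified Lean document; each statement's English description precedes it below -/
import Mathlib

section
/- Let (Λ, Σ, μ) be a probability space and A ⊆ Λ a subset satisfying: for all Δ ∈ Σ, A ∩ Δ = ∅ implies μ(Δ) = 0, and also for all Δ ∈ Σ, Aᶜ ∩ Δ = ∅ implies μ(Δ) = 0. Then there exist two extensions μ⁺ and μ⁻ of μ to the σ-algebra generated by Σ and A such that μ⁺(A) = 1 and μ⁻(A) = 0. -/
open MeasureTheory

section aux

variable {Λ : Type*} [m : MeasurableSpace Λ]

lemma aux_inter_eq (μ : Measure Λ) (B : Set Λ)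
    (hB : ∀ Δ : Set Λ, MeasurableSet Δ → B ∩ Δ = ∅ → μ Δ = 0)
    (Δ : Set Λ) (hΔ : MeasurableSet Δ) : μ (Δ ∩ B) = μ Δ := by
  refine le_antisymm (measure_mono Set.inter_subset_left) ?_
  obtain ⟨D, hDsub, hDm, hDμ⟩ := exists_measurable_superset μ (Δ ∩ B)
  have h0 : μ (Δ \ D) = 0 := by
    refine hB _ (hΔ.diff hDm) ?_
    rw [Set.eq_empty_iff_forall_notMem]
    rintro x ⟨hxB, hxΔ, hxD⟩
    exact hxD (hDsub ⟨hxΔ, hxB⟩)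
  calc μ Δ ≤ μ (Δ ∩ D) + μ (Δ \ D) := measure_le_inter_add_diff μ Δ D
    _ = μ (Δ ∩ D) := by rw [h0, add_zero]
    _ ≤ μ D := measure_mono Set.inter_subset_right
    _ = μ (Δ ∩ B) := hDμ

lemma aux_carath (μ : Measure Λ) (B A : Set Λ) (hBA : B = A ∨ B = Aᶜ) :
    m ⊔ MeasurableSpace.generateFrom {A} ≤
      ((μ.toOuterMeasure.restrict B)).caratheodory := by
  have hBcar : OuterMeasure.IsCaratheodory (μ.toOuterMeasure.restrict B) B := by
    intro t
    simp only [OuterMeasure.restrict_apply]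
    have h1 : t ∩ B ∩ B = t ∩ B := by rw [Set.inter_assoc, Set.inter_self]
    have h2 : (t \ B) ∩ B = ∅ := by
      rw [Set.eq_empty_iff_forall_notMem]; rintro x ⟨⟨_, h⟩, h'⟩; exact h h'
    rw [h1, h2]
    simp
  refine sup_le ?_ ?_
  · intro s hs
    rw [OuterMeasure.isCaratheodory_iff]
    intro t
    simp only [OuterMeasure.restrict_apply]
    have := (MeasureTheory.le_toOuterMeasure_caratheodory μ s hs (t ∩ B))
    rw [this]
    congr 2
    · ext x; exact ⟨fun ⟨⟨h1, h2⟩, h3⟩ => ⟨⟨h1, h3⟩, h2⟩, fun ⟨⟨h1, h3⟩, h2⟩ => ⟨⟨h1, h2⟩, h3⟩⟩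
    · ext x; exact ⟨fun ⟨⟨h1, h2⟩, h3⟩ => ⟨⟨h1, h3⟩, h2⟩, fun ⟨⟨h1, h3⟩, h2⟩ => ⟨⟨h1, h2⟩, h3⟩⟩
  · refine MeasurableSpace.generateFrom_le ?_
    intro s hs
    rw [Set.mem_singleton_iff] at hs
    rw [OuterMeasure.isCaratheodory_iff, hs]
    rcases hBA with rfl | rfl
    · exact hBcar
    · have := (μ.toOuterMeasure.restrict Aᶜ).isCaratheodory_compl hBcar
      rwa [compl_compl] at this

lemma aux_ext (μ : Measure Λ) (B A : Set Λ) (hBA : B = A ∨ B = Aᶜ)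
    (hB : ∀ Δ : Set Λ, MeasurableSet Δ → B ∩ Δ = ∅ → μ Δ = 0) :
    ∃ ν : @Measure Λ (m ⊔ MeasurableSpace.generateFrom {A}),
      (∀ s : Set Λ, MeasurableSet[m ⊔ MeasurableSpace.generateFrom {A}] s →
        ν s = μ (s ∩ B)) ∧
      (∀ Δ : Set Λ, MeasurableSet[m] Δ → ν Δ = μ Δ) := by
  have hcar := aux_carath (m := m) μ B A hBA
  refine ⟨@OuterMeasure.toMeasure Λ (m ⊔ MeasurableSpace.generateFrom {A})
      (μ.toOuterMeasure.restrict B) hcar, ?_, ?_⟩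
  · intro s hs
    rw [@MeasureTheory.toMeasure_apply Λ (m ⊔ MeasurableSpace.generateFrom {A})
      (μ.toOuterMeasure.restrict B) hcar s hs, OuterMeasure.restrict_apply,
      Measure.coe_toOuterMeasure]
  · intro Δ hΔ
    have hΔ' : MeasurableSet[m ⊔ MeasurableSpace.generateFrom {A}] Δ :=
      (le_sup_left : m ≤ m ⊔ MeasurableSpace.generateFrom {A}) Δ hΔ
    rw [@MeasureTheory.toMeasure_apply Λ (m ⊔ MeasurableSpace.generateFrom {A})
      (μ.toOuterMeasure.restrict B) hcar Δ hΔ', OuterMeasure.restrict_apply,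
      Measure.coe_toOuterMeasure]
    exact aux_inter_eq μ B hB Δ hΔ

end aux

theorem stmt_2 {Λ : Type*} [m : MeasurableSpace Λ] (μ : Measure Λ)
    [IsProbabilityMeasure μ] (A : Set Λ)
    (hA : ∀ Δ : Set Λ, MeasurableSet Δ → A ∩ Δ = ∅ → μ Δ = 0)
    (hAc : ∀ Δ : Set Λ, MeasurableSet Δ → Aᶜ ∩ Δ = ∅ → μ Δ = 0) :
    ∃ μp μm : @Measure Λ (m ⊔ MeasurableSpace.generateFrom {A}),
      @IsProbabilityMeasure Λ (m ⊔ MeasurableSpace.generateFrom {A}) μp ∧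
      @IsProbabilityMeasure Λ (m ⊔ MeasurableSpace.generateFrom {A}) μm ∧
      (∀ Δ : Set Λ, MeasurableSet[m] Δ → μp Δ = μ Δ) ∧
      (∀ Δ : Set Λ, MeasurableSet[m] Δ → μm Δ = μ Δ) ∧
      μp A = 1 ∧ μm A = 0 := by
  obtain ⟨μp, hp_apply, hpΔ⟩ := aux_ext (m := m) μ A A (Or.inl rfl) hA
  obtain ⟨μm, hm_apply, hmΔ⟩ := aux_ext (m := m) μ Aᶜ A (Or.inr rfl) hAc
  have hAmem : MeasurableSet[m ⊔ MeasurableSpace.generateFrom {A}] A :=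
    (le_sup_right : MeasurableSpace.generateFrom {A} ≤
        m ⊔ MeasurableSpace.generateFrom {A}) A
      (MeasurableSpace.measurableSet_generateFrom (Set.mem_singleton A))
  refine ⟨μp, μm, ⟨?_⟩, ⟨?_⟩, hpΔ, hmΔ, ?_, ?_⟩
  · rw [hpΔ Set.univ MeasurableSet.univ]; exact measure_univ
  · rw [hmΔ Set.univ MeasurableSet.univ]; exact measure_univ
  · rw [hp_apply A hAmem, Set.inter_self, ← Set.univ_inter A,
      aux_inter_eq μ A hA Set.univ MeasurableSet.univ]
    exact measure_univ
  · rw [hm_apply A hAmem, Set.inter_compl_self, measure_empty]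
end

section
/- Let X be a set with the cardinality of the continuum (i.e., |X| = 2^ℵ₀). Assuming the axiom of choice, the continuum hypothesis is equivalent to the existence of a map x ↦ Δ_x assigning to each x ∈ X a countable subset Δ_x ⊆ X such that for all x₁, x₂ ∈ X, either x₁ ∈ Δ_{x₂} or x₂ ∈ Δ_{x₁}. -/
open Cardinal

lemma stmt_3_univ : (Cardinal.continuum.{u} = Cardinal.aleph.{u} 1) ↔
    (Cardinal.continuum.{0} = Cardinal.aleph.{0} 1) := by
  have h : Cardinal.aleph.{u} 1 = Cardinal.lift.{u} (Cardinal.aleph.{0} 1) := by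
    rw [Cardinal.lift_aleph, Ordinal.lift_one]
  rw [← Cardinal.lift_continuum.{u, 0}, h, Cardinal.lift_inj]

theorem stmt_3 {X : Type} (hX : #X = Cardinal.continuum) :
    Cardinal.continuum = Cardinal.aleph 1 ↔
      ∃ Δ : X → Set X, (∀ x, (Δ x).Countable) ∧
        ∀ x₁ x₂ : X, x₁ ∈ Δ x₂ ∨ x₂ ∈ Δ x₁ := by
  rw [stmt_3_univ]
  constructor
  · intro hCH
    obtain ⟨r, wo, hr⟩ := Cardinal.ord_eq X
    haveI := wo
    refine ⟨fun x => {y | ¬ r x y}, ?_, ?_⟩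
    · intro x
      have hsub : {y | ¬ r x y} ⊆ {y | r y x} ∪ {x} := by
        intro y hy
        rcases trichotomous_of r y x with h | h | h
        · exact Or.inl h
        · exact Or.inr h
        · exact absurd h hy
      refine Set.Countable.mono hsub (Set.Countable.union ?_ (Set.countable_singleton x))
      rw [Cardinal.countable_iff_lt_aleph_one]
      have := Cardinal.card_typein_lt (r := r) x hr
      rw [hX, hCH] at this
      simpa [Ordinal.card_typein] using this
    · intro x₁ x₂
      rcases trichotomous_of r x₁ x₂ with h | h | h
      · exact Or.inl (asymm h)
      · exact Or.inl (fun hh => (irrefl_of r x₂) (h ▸ hh))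
      · exact Or.inr (asymm h)
  · rintro ⟨Δ, hc, hΔ⟩
    by_contra hne
    have hlt : Cardinal.aleph 1 < #X := by
      rw [hX]
      rcases Cardinal.aleph_one_le_continuum.lt_or_eq with h | h
      · exact h
      · exact absurd h.symm hne
    obtain ⟨A, hA⟩ := Cardinal.le_mk_iff_exists_set.1 hlt.le
    have hU : #(⋃ x ∈ A, Δ x) < #X := by
      have h1 : #(⋃ x ∈ A, Δ x) ≤ #A * ⨆ x : A, #(Δ (x : X)) := Cardinal.mk_biUnion_le Δ A
      have h2 : (⨆ x : A, #(Δ (x : X))) ≤ ℵ₀ :=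
        ciSup_le' fun x => Set.Countable.le_aleph0 (hc (x : X))
      have h3 : #A * (⨆ x : A, #(Δ (x : X))) ≤ #A * ℵ₀ := mul_le_mul_right h2 _
      have h4 : #A * ℵ₀ = Cardinal.aleph 1 := by
        rw [hA]
        exact Cardinal.mul_eq_left Cardinal.aleph0_lt_aleph_one.le Cardinal.aleph0_lt_aleph_one.le
          Cardinal.aleph0_ne_zero
      exact lt_of_le_of_lt (h1.trans h3) (h4 ▸ hlt)
    obtain ⟨z, hz⟩ : ∃ z : X, z ∉ ⋃ x ∈ A, Δ x := by
      by_contra h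
      push_neg at h
      have heq : (⋃ x ∈ A, Δ x) = Set.univ := Set.eq_univ_of_forall h
      rw [heq, Cardinal.mk_univ] at hU
      exact hU.false
    have hsub : A ⊆ Δ z := by
      intro a ha
      rcases hΔ a z with h | h
      · exact h
      · exact absurd (Set.mem_biUnion ha h) hz
    have : #A ≤ ℵ₀ := by
      exact ((hc z).mono hsub).le_aleph0
    rw [hA] at this
    exact absurd this (not_le.mpr Cardinal.aleph0_lt_aleph_one)
end

section
/- Assuming the axiom of choice and with X a set of cardinality of the continuum, the continuum hypothesis is equivalent to the existence of subsets R, C ⊆ X² with R ∪ C = X² such that for every x ∈ X the sets R ∩ ({x'} × {x} : x' ∈ X) (the intersection of R with the row through x) and C ∩ ({x} × {x'} : x' ∈ X) (the intersection of C with the column through x) are countable. -/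
open Cardinal

universe u in
theorem stmt_4_aux :
    (Cardinal.continuum.{u} = Cardinal.aleph.{u} 1) ↔
      (Cardinal.continuum.{0} = Cardinal.aleph.{0} 1) := by
  have h1 : Cardinal.lift.{u, 0} (Cardinal.aleph.{0} 1) = Cardinal.aleph.{u} 1 := by
    rw [Cardinal.lift_aleph, Ordinal.lift_one]
  rw [← Cardinal.lift_continuum.{u, 0}, ← h1, Cardinal.lift_inj]

theorem stmt_4 {X : Type} (hX : #X = Cardinal.continuum) :
    Cardinal.continuum = Cardinal.aleph 1 ↔
      ∃ R C : Set (X × X), R ∪ C = Set.univ ∧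
        ∀ x : X,
          (R ∩ {p : X × X | p.2 = x}).Countable ∧
          (C ∩ {p : X × X | p.1 = x}).Countable := by
  rw [stmt_4_aux]
  constructor
  · intro hCH
    -- X is equinumerous with (aleph 1).ord.ToType
    have hX1 : #X = #((Cardinal.aleph 1 : Cardinal.{0}).ord.ToType) := by
      rw [Cardinal.mk_ord_toType, hX]; exact hCH
    obtain ⟨e⟩ := Cardinal.eq.mp hX1
    refine ⟨{p | e p.1 ≤ e p.2}, {p | e p.2 ≤ e p.1}, ?_, ?_⟩
    · ext p
      simp only [Set.mem_union, Set.mem_setOf_eq, Set.mem_univ, iff_true]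
      exact le_total (e p.1) (e p.2)
    · intro x
      have hIic : (Set.Iic (e x)).Countable := by
        rw [Cardinal.countable_iff_lt_aleph_one]
        have h1 : #(Set.Iio (e x)) < Cardinal.aleph 1 :=
          Cardinal.mk_Iio_ord_toType (e x)
        have h2 : Set.Iic (e x) = insert (e x) (Set.Iio (e x)) := by
          ext y; simp [le_iff_lt_or_eq, or_comm]
        rw [← Cardinal.countable_iff_lt_aleph_one] at h1 ⊢
        rw [h2]; exact h1.insert _
      have hpre : {x' : X | e x' ≤ e x}.Countable := by
        have : {x' : X | e x' ≤ e x} = e ⁻¹' (Set.Iic (e x)) := rfl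
        rw [this]
        exact hIic.preimage e.injective
      constructor
      · refine Set.Countable.mono ?_ (hpre.prod (Set.countable_singleton x))
        rintro ⟨a, b⟩ ⟨h1, h2⟩
        simp only [Set.mem_setOf_eq] at h1 h2
        subst h2
        exact ⟨h1, rfl⟩
      · refine Set.Countable.mono ?_ ((Set.countable_singleton x).prod hpre)
        rintro ⟨a, b⟩ ⟨h1, h2⟩
        simp only [Set.mem_setOf_eq] at h1 h2
        subst h2
        exact ⟨rfl, h1⟩
  · rintro ⟨R, C, hUnion, hRC⟩
    refine le_antisymm ?_ Cardinal.aleph_one_le_continuum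
    by_contra h
    push_neg at h
    have hle : #((Cardinal.aleph 1 : Cardinal.{0}).ord.ToType) ≤ #X := by
      rw [Cardinal.mk_ord_toType, hX]; exact h.le
    obtain ⟨f⟩ := Cardinal.le_def _ _ |>.mp hle
    set T : (Cardinal.aleph 1 : Cardinal.{0}).ord.ToType → Set X :=
      fun a => {y : X | (f a, y) ∈ C} with hT
    have hTc : ∀ a, (T a).Countable := by
      intro a
      have : T a = (Prod.mk (f a)) ⁻¹' (C ∩ {p : X × X | p.1 = f a}) := by
        ext y; simp [hT]
      rw [this]
      exact ((hRC (f a)).2).preimage (fun _ _ hyz => congrArg Prod.snd hyz)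
    set S : Set X := ⋃ a, T a with hS
    have hSlt : #S < #X := by
      calc #S ≤ #((Cardinal.aleph 1 : Cardinal.{0}).ord.ToType) * ⨆ a, #(T a) :=
            Cardinal.mk_iUnion_le T
        _ ≤ Cardinal.aleph 1 * Cardinal.aleph0 := by
            apply mul_le_mul'
            · rw [Cardinal.mk_ord_toType]
            · exact ciSup_le' fun a =>
                Cardinal.mk_le_aleph0_iff.mpr (hTc a).to_subtype
        _ = Cardinal.aleph 1 := by
            rw [Cardinal.mul_eq_max (Cardinal.aleph0_le_aleph 1) le_rfl,
              max_eq_left (Cardinal.aleph0_le_aleph 1)]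
        _ < #X := by rw [hX]; exact h
    have hSne : ∃ y : X, y ∉ S := by
      by_contra hc
      push_neg at hc
      have : S = Set.univ := Set.eq_univ_iff_forall.mpr hc
      rw [this, Cardinal.mk_univ] at hSlt
      exact lt_irrefl _ hSlt
    obtain ⟨y, hy⟩ := hSne
    have hRow : ∀ a, (f a, y) ∈ R ∩ {p : X × X | p.2 = y} := by
      intro a
      have hnC : (f a, y) ∉ C := fun hc => hy (Set.mem_iUnion.mpr ⟨a, hc⟩)
      have : (f a, y) ∈ R ∪ C := by rw [hUnion]; trivial
      exact ⟨this.resolve_right hnC, rfl⟩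
    have hinj : #((Cardinal.aleph 1 : Cardinal.{0}).ord.ToType) ≤
        #(R ∩ {p : X × X | p.2 = y} : Set (X × X)) := by
      refine Cardinal.le_def _ _ |>.mpr ⟨⟨fun a => ⟨(f a, y), hRow a⟩, ?_⟩⟩
      intro a b hab
      simp only [Subtype.mk.injEq, Prod.mk.injEq] at hab
      exact f.injective hab.1
    rw [Cardinal.mk_ord_toType] at hinj
    have := (Cardinal.countable_iff_lt_aleph_one _).mp (hRC y).1
    exact absurd (hinj.trans_lt this) (lt_irrefl _)
end

section
/- Assume the continuum hypothesis. Let X be a set of continuum cardinality and suppose given a family of measurable sets (Λ_x)_{x∈X} in a measurable space (Λ, Σ) together with, for each x, a probability measure μ_x with μ_x(Λ_x) = 1 and μ_x(Λ_y) = 0 for y ≠ x. Then there exists a map m assigning to each x ∈ X a sequence (m_n^x)_{n∈ℕ} in X \ {x} such that the sets Λ_x^m := Λ_x ∩ ∩_{n∈ℕ} (Λ_{m_n^x})ᶜ are Σ-measurable, pairwise disjoint (Λ_x^m ∩ Λ_y^m = ∅ for x ≠ y), and satisfy μ_x(Λ_x^m) = 1. -/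
open MeasureTheory Cardinal

theorem stmt_18 (CH : Cardinal.continuum = Cardinal.aleph 1)
    {X : Type} (hX : #X = Cardinal.continuum)
    {Λ : Type*} [MeasurableSpace Λ]
    (L : X → Set Λ) (hmeas : ∀ x, MeasurableSet (L x))
    (μ : X → Measure Λ) (hprob : ∀ x, IsProbabilityMeasure (μ x))
    (hfull : ∀ x, μ x (L x) = 1)
    (hzero : ∀ x y, y ≠ x → μ x (L y) = 0) :
    ∃ m : X → ℕ → X,
      (∀ x n, m x n ≠ x) ∧
      (∀ x, MeasurableSet (L x ∩ ⋂ n : ℕ, (L (m x n))ᶜ)) ∧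
      (∀ x y, x ≠ y →
        (L x ∩ ⋂ n : ℕ, (L (m x n))ᶜ) ∩ (L y ∩ ⋂ n : ℕ, (L (m y n))ᶜ) = ∅) ∧
      (∀ x, μ x (L x ∩ ⋂ n : ℕ, (L (m x n))ᶜ) = 1) := by
  -- X is equinumerous with ω₁'s underlying type
  have CH0 : Cardinal.continuum.{0} = Cardinal.aleph.{0} 1 := by
    apply Cardinal.lift_injective.{_,0}
    rw [Cardinal.lift_continuum, Cardinal.lift_aleph, CH]
    simp
  have hX1 : #X = Cardinal.aleph 1 := hX.trans CH0
  have hT : #((Cardinal.aleph 1).ord.ToType) = Cardinal.aleph 1 := by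
    rw [Cardinal.mk_toType, Cardinal.card_ord]
  obtain ⟨e⟩ := Cardinal.eq.mp (hX1.trans hT.symm)
  -- X is nontrivial
  have hnt : Nontrivial X := by
    rw [← Cardinal.one_lt_iff_nontrivial, hX1]
    exact lt_of_lt_of_le (by norm_num) (le_trans Cardinal.aleph0_lt_aleph_one.le le_rfl)
  -- the countable predecessor sets
  have hΔ : ∀ x : X, ({y : X | e y < e x} \ {x} ∪ {Classical.choose (exists_ne x)}).Countable := by
    intro x
    apply Set.Countable.union _ (Set.countable_singleton _)
    apply Set.Countable.mono Set.diff_subset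
    have : {y : X | e y < e x} ⊆ e ⁻¹' (Set.Iio (e x)) := fun y hy => hy
    apply Set.Countable.mono this
    have : (Set.Iio (e x)).Countable := by
      rw [Cardinal.countable_iff_lt_aleph_one]
      exact Cardinal.mk_Iio_ord_toType (e x)
    exact this.preimage e.injective
  have hne : ∀ x : X, ({y : X | e y < e x} \ {x} ∪ {Classical.choose (exists_ne x)}).Nonempty :=
    fun x => ⟨_, Or.inr rfl⟩
  choose m hm using fun x => (hΔ x).exists_eq_range (hne x)
  refine ⟨m, ?_, ?_, ?_, ?_⟩
  · -- m x n ≠ x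
    intro x n
    have : m x n ∈ {y : X | e y < e x} \ {x} ∪ {Classical.choose (exists_ne x)} := by
      rw [hm x]; exact ⟨n, rfl⟩
    rcases this with h | h
    · exact h.2
    · rw [Set.mem_singleton_iff] at h; rw [h]; exact Classical.choose_spec (exists_ne x)
  · intro x
    exact (hmeas x).inter (MeasurableSet.iInter fun n => (hmeas (m x n)).compl)
  · -- disjointness
    intro x y hxy
    -- Sierpiński: y ∈ range (m x) or x ∈ range (m y)
    have key : y ∈ Set.range (m x) ∨ x ∈ Set.range (m y) := by
      rcases lt_or_gt_of_ne (fun h : e x = e y => hxy (e.injective h)) with h | h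
      · right; rw [← hm y]; exact Or.inl ⟨h, hxy⟩
      · left; rw [← hm x]; exact Or.inl ⟨h, Ne.symm hxy⟩
    ext z
    simp only [Set.mem_inter_iff, Set.mem_iInter, Set.mem_compl_iff, Set.mem_empty_iff_false,
      iff_false, not_and]
    rintro ⟨hzx, hzx'⟩ hzy hzy'
    rcases key with ⟨n, hn⟩ | ⟨n, hn⟩
    · exact hzx' n (hn ▸ hzy)
    · exact hzy' n (hn ▸ hzx)
  · -- measure
    intro x
    have hnull : μ x (⋃ n, L (m x n)) = 0 := by
      refine measure_iUnion_null fun n => hzero x (m x n) ?_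
      have : m x n ∈ {y : X | e y < e x} \ {x} ∪ {Classical.choose (exists_ne x)} := by
        rw [hm x]; exact ⟨n, rfl⟩
      rcases this with h | h
      · exact h.2
      · rw [Set.mem_singleton_iff] at h; rw [h]; exact Classical.choose_spec (exists_ne x)
    have : (⋂ n, (L (m x n))ᶜ) = (⋃ n, L (m x n))ᶜ := by
      rw [Set.compl_iUnion]
    rw [this, measure_inter_conull (by rwa [compl_compl]), hfull]
end
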